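/- Let n ≥ 1 be an integer, A, B ∈ ℝ^{n×n}, and let μ be a probability measure on ℝⁿ with μ({0}) = 0 such that for all indices i, j ∈ {1,…,n}, ∫ (u_i u_j / ‖u‖²) dμ(u) equals 1/n if i = j and 0 otherwise (isotropic normalized second moment). Then ∫ ‖Broyd(B, A, u) − A‖_F² dμ(u) = (1 − 1/n) ‖B − A‖_F². -/

import Mathlib

open Matrix

noncomputable def vecNorm {n : ℕ} (u : Fin n → ℝ) : ℝ := Real.sqrt (∑ i, u i ^ 2)

noncomputable def frobNorm {n : ℕ} (M : Matrix (Fin n) (Fin n) ℝ) : ℝ :=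
  Real.sqrt (∑ i, ∑ j, M i j ^ 2)

noncomputable def specNorm {n : ℕ} (M : Matrix (Fin n) (Fin n) ℝ) : ℝ :=
  sSup {r : ℝ | ∃ u : Fin n → ℝ, vecNorm u = 1 ∧ r = vecNorm (M.mulVec u)}

noncomputable def broyd {n : ℕ} (B A : Matrix (Fin n) (Fin n) ℝ) (u : Fin n → ℝ) :
    Matrix (Fin n) (Fin n) ℝ :=
  B + (∑ i, u i ^ 2)⁻¹ • ((A - B) * Matrix.vecMulVec u u)

noncomputable def matCLM {n : ℕ} (M : Matrix (Fin n) (Fin n) ℝ) :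
    (Fin n → ℝ) →L[ℝ] (Fin n → ℝ) :=
  LinearMap.toContinuousLinearMap M.mulVecLin

theorem broyd_pointwise {n : ℕ} (A B : Matrix (Fin n) (Fin n) ℝ) (u : Fin n → ℝ) :
    frobNorm (broyd B A u - A) ^ 2 =
      (∑ i, ∑ j, (B - A) i j ^ 2)
        - ∑ i, ∑ k, ∑ l, (B - A) i k * (B - A) i l * (u k * u l / ∑ j, u j ^ 2) := by
  classical
  set s : ℝ := ∑ j, u j ^ 2 with hs
  set v : Fin n → ℝ := fun i => ∑ k, (B - A) i k * u k with hv
  have hentry : ∀ i j, (broyd B A u - A) i j = (B - A) i j - s⁻¹ * (v i * u j) := by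
    intro i j
    simp only [broyd, Matrix.sub_apply, Matrix.add_apply, Matrix.smul_apply,
      Matrix.mul_apply, Matrix.vecMulVec_apply, smul_eq_mul, hv]
    have key : (∑ k, (A i k - B i k) * (u k * u j))
        = -((∑ k, (B i k - A i k) * u k) * u j) := by
      rw [Finset.sum_mul, ← Finset.sum_neg_distrib]
      exact Finset.sum_congr rfl fun k _ => by ring
    rw [← hs, key]
    ring
  have hnn : (0:ℝ) ≤ ∑ i, ∑ j, (broyd B A u - A) i j ^ 2 :=
    Finset.sum_nonneg fun i _ => Finset.sum_nonneg fun j _ => sq_nonneg _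
  have h1 : frobNorm (broyd B A u - A) ^ 2
      = ∑ i, ∑ j, ((B - A) i j - s⁻¹ * (v i * u j)) ^ 2 := by
    rw [frobNorm, Real.sq_sqrt hnn]
    exact Finset.sum_congr rfl fun i _ => Finset.sum_congr rfl fun j _ => by rw [hentry]
  rw [h1]
  have hexp : ∀ i, ∑ j, ((B - A) i j - s⁻¹ * (v i * u j)) ^ 2
      = (∑ j, (B - A) i j ^ 2) - 2 * s⁻¹ * v i ^ 2 + s⁻¹ ^ 2 * v i ^ 2 * s := by
    intro i
    have e1 : ∀ j ∈ Finset.univ, ((B - A) i j - s⁻¹ * (v i * u j)) ^ 2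
        = (B - A) i j ^ 2 - 2 * s⁻¹ * v i * ((B - A) i j * u j)
            + s⁻¹ ^ 2 * v i ^ 2 * u j ^ 2 := by
      intro j _; ring
    rw [Finset.sum_congr rfl e1, Finset.sum_add_distrib, Finset.sum_sub_distrib,
      ← Finset.mul_sum, ← Finset.mul_sum]
    have : (∑ j, (B - A) i j * u j) = v i := rfl
    rw [this, ← hs]
    ring
  rw [Finset.sum_congr rfl fun i _ => hexp i, Finset.sum_add_distrib,
    Finset.sum_sub_distrib, ← Finset.mul_sum]
  have hVmul : (∑ i, s⁻¹ ^ 2 * v i ^ 2 * s) = s⁻¹ ^ 2 * (∑ i, v i ^ 2) * s := by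
    simp [Finset.mul_sum, Finset.sum_mul, mul_assoc]
  rw [hVmul]
  set V : ℝ := ∑ i, v i ^ 2 with hV
  have hRHS : (∑ i, ∑ k, ∑ l, (B - A) i k * (B - A) i l * (u k * u l / s)) = V / s := by
    rw [hV, Finset.sum_div]
    refine Finset.sum_congr rfl fun i _ => ?_
    rw [hv]
    simp only [pow_two]
    rw [Finset.sum_mul_sum, Finset.sum_div]
    refine Finset.sum_congr rfl fun k _ => ?_
    rw [Finset.sum_div]
    refine Finset.sum_congr rfl fun l _ => by ring
  rw [hRHS]
  rcases eq_or_ne s 0 with h | h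
  · simp [h]
  · field_simp
    ring

open MeasureTheory in
theorem random_broyden_progress_expectation {n : ℕ} (hn : 1 ≤ n)
    (A B : Matrix (Fin n) (Fin n) ℝ)
    (μ : Measure (Fin n → ℝ)) [IsProbabilityMeasure μ] (h0 : μ {0} = 0)
    (hiso : ∀ i j : Fin n,
      (∫ u : Fin n → ℝ, (u i * u j) / (∑ k, u k ^ 2) ∂μ)
        = if i = j then 1 / (n : ℝ) else 0) :
    (∫ u : Fin n → ℝ, frobNorm (broyd B A u - A) ^ 2 ∂μ)
      = (1 - 1 / (n : ℝ)) * frobNorm (B - A) ^ 2 := by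
  classical
  set φ : Fin n → Fin n → (Fin n → ℝ) → ℝ :=
    fun k l u => u k * u l / ∑ j, u j ^ 2 with hφ
  have hφmeas : ∀ k l, Measurable (φ k l) := fun k l =>
    ((measurable_pi_apply k).mul (measurable_pi_apply l)).div
      (Finset.measurable_sum _ fun j _ => (measurable_pi_apply j).pow_const 2)
  have hφint : ∀ k l, Integrable (φ k l) μ := by
    intro k l
    refine Integrable.mono' (integrable_const (1:ℝ)) (hφmeas k l).aestronglyMeasurable ?_
    filter_upwards with u
    rw [Real.norm_eq_abs, hφ]
    rcases eq_or_ne (∑ j, u j ^ 2) 0 with h | h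
    · simp [h]
    have hs : (0:ℝ) < ∑ j, u j ^ 2 :=
      lt_of_le_of_ne (Finset.sum_nonneg fun j _ => sq_nonneg _) (Ne.symm h)
    rw [abs_div, abs_of_pos hs, div_le_one hs, abs_mul]
    have hk : |u k| ≤ Real.sqrt (∑ j, u j ^ 2) := by
      rw [show |u k| = Real.sqrt (u k ^ 2) by rw [Real.sqrt_sq_eq_abs]]
      exact Real.sqrt_le_sqrt (Finset.single_le_sum (fun j _ => sq_nonneg (u j))
        (Finset.mem_univ k))
    have hl : |u l| ≤ Real.sqrt (∑ j, u j ^ 2) := by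
      rw [show |u l| = Real.sqrt (u l ^ 2) by rw [Real.sqrt_sq_eq_abs]]
      exact Real.sqrt_le_sqrt (Finset.single_le_sum (fun j _ => sq_nonneg (u j))
        (Finset.mem_univ l))
    calc |u k| * |u l| ≤ Real.sqrt (∑ j, u j ^ 2) * Real.sqrt (∑ j, u j ^ 2) := by
          exact mul_le_mul hk hl (abs_nonneg _) (Real.sqrt_nonneg _)
      _ = ∑ j, u j ^ 2 := Real.mul_self_sqrt hs.le
  set C : Matrix (Fin n) (Fin n) ℝ := B - A with hCdef
  have hterm : ∀ (i k l : Fin n),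
      Integrable (fun u : Fin n → ℝ => C i k * C i l * φ k l u) μ :=
    fun i k l => (hφint k l).const_mul _
  have hg : Integrable (fun u : Fin n → ℝ =>
      ∑ i, ∑ k, ∑ l, C i k * C i l * φ k l u) μ := by
    refine integrable_finset_sum _ fun i _ => ?_
    refine integrable_finset_sum _ fun k _ => ?_
    exact integrable_finset_sum _ fun l _ => hterm i k l
  have hrw : (∫ u : Fin n → ℝ, frobNorm (broyd B A u - A) ^ 2 ∂μ)
      = ∫ u : Fin n → ℝ, ((∑ i, ∑ j, C i j ^ 2)
          - ∑ i, ∑ k, ∑ l, C i k * C i l * φ k l u) ∂μ := by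
    refine integral_congr_ae (Filter.Eventually.of_forall fun u => ?_)
    exact broyd_pointwise A B u
  rw [hrw, integral_sub (integrable_const _) hg, integral_const, probReal_univ,
    one_smul]
  have hgval : (∫ u : Fin n → ℝ, (∑ i, ∑ k, ∑ l, C i k * C i l * φ k l u) ∂μ)
      = (∑ i, ∑ k, C i k ^ 2) * (1 / (n : ℝ)) := by
    rw [integral_finset_sum _ fun i _ => integrable_finset_sum _ fun k _ =>
      integrable_finset_sum _ fun l _ => hterm i k l]
    have : ∀ i : Fin n, (∫ u : Fin n → ℝ, (∑ k, ∑ l, C i k * C i l * φ k l u) ∂μ)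
        = (∑ k, C i k ^ 2) * (1 / (n : ℝ)) := by
      intro i
      rw [integral_finset_sum _ fun k _ => integrable_finset_sum _ fun l _ => hterm i k l,
        Finset.sum_mul]
      refine Finset.sum_congr rfl fun k _ => ?_
      rw [integral_finset_sum _ fun l _ => hterm i k l]
      have : ∀ l : Fin n, (∫ u : Fin n → ℝ, C i k * C i l * φ k l u ∂μ)
          = C i k * C i l * (if k = l then 1 / (n : ℝ) else 0) := by
        intro l
        rw [integral_const_mul, hiso k l]
      rw [Finset.sum_congr rfl fun l _ => this l]
      simp [Finset.sum_ite_eq, pow_two]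
    rw [Finset.sum_congr rfl fun i _ => this i, ← Finset.sum_mul]
  rw [hgval]
  have hfrob : frobNorm (B - A) ^ 2 = ∑ i, ∑ k, C i k ^ 2 := by
    rw [frobNorm]; exact Real.sq_sqrt (Finset.sum_nonneg fun i _ =>
      Finset.sum_nonneg fun j _ => sq_nonneg _)
  have hjj : (∑ i, ∑ j, C i j ^ 2) = ∑ i, ∑ k, C i k ^ 2 := rfl
  rw [hjj, hfrob]
  ring
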